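/- The abelianization of the group presented on three generators a, b, c with the two relators R_1 = a b⁻¹ a⁻² c² b c and R_2 = a b a⁻¹ c² b a² b c b is an infinite cyclic group, i.e. it is isomorphic to ℤ. -/

import Mathlib

namespace V3372Aux

abbrev rels : Set (FreeGroup (Fin 3)) :=
  ({FreeGroup.of 0 * (FreeGroup.of 1)⁻¹ * (FreeGroup.of 0) ^ (-2 : ℤ) *
      (FreeGroup.of 2) ^ (2 : ℤ) * FreeGroup.of 1 * FreeGroup.of 2,
    FreeGroup.of 0 * FreeGroup.of 1 * (FreeGroup.of 0)⁻¹ *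
      (FreeGroup.of 2) ^ (2 : ℤ) * FreeGroup.of 1 *
      (FreeGroup.of 0) ^ (2 : ℤ) * FreeGroup.of 1 * FreeGroup.of 2 *
      FreeGroup.of 1} : Set (FreeGroup (Fin 3)))

abbrev G := PresentedGroup rels

def fgen : Fin 3 → Multiplicative ℤ :=
  ![Multiplicative.ofAdd 12, Multiplicative.ofAdd (-9), Multiplicative.ofAdd 4]

lemma hrels : ∀ r ∈ rels, FreeGroup.lift fgen r = 1 := by
  intro r hr
  rcases hr with h | h <;> subst h <;>
    simp [fgen, ← ofAdd_add, ← ofAdd_neg, ← ofAdd_zsmul, ← ofAdd_nsmul]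

def φ : Abelianization G →* Multiplicative ℤ :=
  Abelianization.lift (PresentedGroup.toGroup hrels)

def gelt : Abelianization G :=
  Abelianization.of ((PresentedGroup.of 0)⁻¹ * (PresentedGroup.of 1)⁻¹ * PresentedGroup.of 2)

def ψ : Multiplicative ℤ →* Abelianization G := zpowersHom _ gelt

lemma rel_one (r : FreeGroup (Fin 3)) (hr : r ∈ rels) :
    PresentedGroup.mk rels r = 1 :=
  (QuotientGroup.eq_one_iff r).mpr (Subgroup.subset_normalClosure hr)

end V3372Aux

/-- The abelianization of `⟨a, b, c ∣ a b⁻¹ a⁻² c² b c, a b a⁻¹ c² b a² b c b⟩`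
(the fundamental group of the manifold v3372) is infinite cyclic, i.e. isomorphic
to `ℤ`. -/
theorem abelianization_v3372_iso_int :
    Nonempty
      (Abelianization
          (PresentedGroup
            ({FreeGroup.of 0 * (FreeGroup.of 1)⁻¹ * (FreeGroup.of 0) ^ (-2 : ℤ) *
                (FreeGroup.of 2) ^ (2 : ℤ) * FreeGroup.of 1 * FreeGroup.of 2,
              FreeGroup.of 0 * FreeGroup.of 1 * (FreeGroup.of 0)⁻¹ *
                (FreeGroup.of 2) ^ (2 : ℤ) * FreeGroup.of 1 *
                (FreeGroup.of 0) ^ (2 : ℤ) * FreeGroup.of 1 * FreeGroup.of 2 *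
                FreeGroup.of 1} :
              Set (FreeGroup (Fin 3)))) ≃*
        Multiplicative ℤ) := by
  open V3372Aux in
  refine ⟨{ toFun := φ, invFun := ψ, left_inv := ?_, right_inv := ?_, map_mul' := map_mul φ }⟩
  · -- additive versions of the relators
    have hφψ : (ψ.comp φ : Abelianization G →* Abelianization G) = MonoidHom.id _ := by
      -- abbreviations
      set a : Abelianization G := Abelianization.of (PresentedGroup.of 0) with ha
      set b : Abelianization G := Abelianization.of (PresentedGroup.of 1) with hb
      set c : Abelianization G := Abelianization.of (PresentedGroup.of 2) with hc
      have h1 : a * b⁻¹ * a ^ (-2 : ℤ) * c ^ (2 : ℤ) * b * c = 1 := by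
        have := congrArg Abelianization.of (rel_one _ (Or.inl rfl))
        simpa [ha, hb, hc, PresentedGroup.of] using this
      have h2 : a * b * a⁻¹ * c ^ (2 : ℤ) * b * a ^ (2 : ℤ) * b * c * b = 1 := by
        have := congrArg Abelianization.of (rel_one _ (Or.inr rfl))
        simpa [ha, hb, hc, PresentedGroup.of] using this
      -- move to the additive world
      have h1' : Additive.ofMul a + (- Additive.ofMul b) + ((-2:ℤ) • Additive.ofMul a) +
          ((2:ℤ) • Additive.ofMul c) + Additive.ofMul b + Additive.ofMul c = 0 := by
        have := congrArg Additive.ofMul h1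
        simpa only [ofMul_mul, ofMul_inv, ofMul_zpow, ofMul_one] using this
      have h2' : Additive.ofMul a + Additive.ofMul b + (- Additive.ofMul a) +
          ((2:ℤ) • Additive.ofMul c) + Additive.ofMul b + ((2:ℤ) • Additive.ofMul a) +
          Additive.ofMul b + Additive.ofMul c + Additive.ofMul b = 0 := by
        have := congrArg Additive.ofMul h2
        simpa only [ofMul_mul, ofMul_inv, ofMul_zpow, ofMul_one] using this
      have hg : Additive.ofMul gelt =
          -Additive.ofMul a + -Additive.ofMul b + Additive.ofMul c := by
        simp [gelt, ha, hb, hc]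
      have key : ∀ (n : ℤ) (x : Abelianization G), (n • Additive.ofMul x = Additive.ofMul x) →
          True := fun _ _ _ => trivial
      ext i
      fin_cases i <;>
        simp only [Fin.isValue, MonoidHom.comp_apply, MonoidHom.id_apply, φ, ψ,
          zpowersHom_apply, Abelianization.lift_apply_of, PresentedGroup.toGroup.of, fgen,
          Matrix.cons_val_zero, Matrix.cons_val_one, Matrix.head_cons, Matrix.cons_val_two,
          Matrix.tail_cons, toAdd_ofAdd]
      · show gelt ^ (12:ℤ) = a
        apply Additive.ofMul.injective
        rw [ofMul_zpow, hg]
        linear_combination (norm := module) (7:ℤ) • h1' + (-3:ℤ) • h2'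
      · show gelt ^ (-9:ℤ) = b
        apply Additive.ofMul.injective
        rw [ofMul_zpow, hg]
        linear_combination (norm := module) (-5:ℤ) • h1' + (2:ℤ) • h2'
      · show gelt ^ (4:ℤ) = c
        apply Additive.ofMul.injective
        rw [ofMul_zpow, hg]
        linear_combination (norm := module) (2:ℤ) • h1' + (-1:ℤ) • h2'
    intro x
    exact DFunLike.congr_fun hφψ x
  · intro n
    have hg1 : φ gelt = Multiplicative.ofAdd 1 := by
      simp [φ, gelt, fgen, ← ofAdd_neg, ← ofAdd_add]
    show φ (gelt ^ n.toAdd) = n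
    rw [map_zpow, hg1, ← ofAdd_zsmul]
    simp
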